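/- Let (X,d) be a geodesic metric space which is δ-hyperbolic (δ ≥ 0). Then there is a constant D ≥ 0, depending only on δ, and a constant E ≥ 0, depending only on R and δ, such that for all points x, y ∈ X with d(x,y) ≥ 2R + D, for any x' in the shadow S_y(x,R) and any y' in the shadow S_x(y,R), every geodesic segment from x' to y' contains a subsegment [p',q'] whose Hausdorff distance from a geodesic segment [x,y] is at most E (i.e. [p',q'] E-fellow travels [x,y]). -/

import Mathlib

/-- The Gromov product of `x` and `y` based at `u`. -/
noncomputable def gromovProd {X : Type*} [MetricSpace X] (u x y : X) : ℝ :=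
  (dist u x + dist u y - dist x y) / 2

/-- `X` is δ-hyperbolic in the Gromov product sense. -/
def IsDeltaHyperbolic (X : Type*) [MetricSpace X] (δ : ℝ) : Prop :=
  ∀ x y z w : X, gromovProd w x z ≥ min (gromovProd w x y) (gromovProd w y z) - δ

/-- `s` is a geodesic segment from `x` to `y`: the image of an isometric embedding of
the interval `[0, dist x y]` sending the endpoints to `x` and `y`. -/
def IsGeodesicSegment {X : Type*} [MetricSpace X] (s : Set X) (x y : X) : Prop :=
  ∃ γ : ℝ → X, γ 0 = x ∧ γ (dist x y) = y ∧
    (∀ u ∈ Set.Icc (0 : ℝ) (dist x y), ∀ v ∈ Set.Icc (0 : ℝ) (dist x y),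
      dist (γ u) (γ v) = |u - v|) ∧
    s = γ '' Set.Icc (0 : ℝ) (dist x y)

/-- `X` is a geodesic metric space. -/
def IsGeodesicSpace (X : Type*) [MetricSpace X] : Prop :=
  ∀ x y : X, ∃ s : Set X, IsGeodesicSegment s x y

/-- The shadow `S_x(y, R) = { z | (y, z)_x ≥ d(x,y) - R }`. -/
def shadow {X : Type*} [MetricSpace X] (x y : X) (R : ℝ) : Set X :=
  { z : X | gromovProd x y z ≥ dist x y - R }

lemma geo_dists {X : Type*} [MetricSpace X] {γ : ℝ → X} {u v : X}
    (h0 : γ 0 = u) (h1 : γ (dist u v) = v)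
    (hiso : ∀ s ∈ Set.Icc (0:ℝ) (dist u v), ∀ t ∈ Set.Icc (0:ℝ) (dist u v),
      dist (γ s) (γ t) = |s - t|) :
    ∀ t ∈ Set.Icc (0:ℝ) (dist u v), dist u (γ t) = t ∧ dist (γ t) v = dist u v - t := by
  intro t ht
  constructor
  · have h := hiso 0 ⟨le_rfl, dist_nonneg⟩ t ht
    rw [h0] at h
    rw [h, zero_sub, abs_neg, abs_of_nonneg ht.1]
  · have h := hiso t ht (dist u v) ⟨dist_nonneg, le_rfl⟩
    rw [h1] at h
    rw [h, abs_of_nonpos (sub_nonpos.mpr ht.2), neg_sub]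

lemma proj_lemma {X : Type*} [MetricSpace X] {δ : ℝ} (hhyp : IsDeltaHyperbolic X δ)
    {γ : ℝ → X} {u v : X} (h0 : γ 0 = u) (h1 : γ (dist u v) = v)
    (hiso : ∀ s ∈ Set.Icc (0:ℝ) (dist u v), ∀ t ∈ Set.Icc (0:ℝ) (dist u v),
      dist (γ s) (γ t) = |s - t|) (w : X) :
    ∃ t ∈ Set.Icc (0:ℝ) (dist u v), dist w (γ t) ≤ gromovProd w u v + 2*δ := by
  have hL : (0:ℝ) ≤ dist u v := dist_nonneg
  have htr1 : dist w v ≤ dist w u + dist u v := dist_triangle w u v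
  have htr2 : dist w u ≤ dist w v + dist u v := by
    have := dist_triangle w v u; rwa [dist_comm v u] at this
  set t := (dist w u - dist w v + dist u v)/2 with ht
  have htmem : t ∈ Set.Icc (0:ℝ) (dist u v) := ⟨by simp only [ht]; linarith, by simp only [ht]; linarith⟩
  obtain ⟨hdu, hdv⟩ := geo_dists h0 h1 hiso t htmem
  have hyp := hhyp u (γ t) v w
  simp only [gromovProd] at hyp ⊢
  have heq : (dist w u + dist w (γ t) - dist u (γ t)) / 2
      = (dist w (γ t) + dist w v - dist (γ t) v) / 2 := by
    rw [hdu, hdv]; simp only [ht]; ring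
  rw [heq, min_self] at hyp
  refine ⟨t, htmem, ?_⟩
  have : dist (γ t) v = dist u v - t := hdv
  simp only [ht] at this
  linarith [hyp, this]

lemma subseg {X : Type*} [MetricSpace X] {γ : ℝ → X} {x y : X}
    (hiso : ∀ u ∈ Set.Icc (0:ℝ) (dist x y), ∀ v ∈ Set.Icc (0:ℝ) (dist x y),
      dist (γ u) (γ v) = |u - v|)
    {a b : ℝ} (ha : a ∈ Set.Icc (0:ℝ) (dist x y)) (hb : b ∈ Set.Icc (0:ℝ) (dist x y))
    (hab : a ≤ b) :
    IsGeodesicSegment (γ '' Set.Icc a b) (γ a) (γ b) := by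
  have hd : dist (γ a) (γ b) = b - a := by
    rw [hiso a ha b hb, abs_of_nonpos (by linarith), neg_sub]
  refine ⟨fun t => γ (t + a), by simp, ?_, ?_, ?_⟩
  · rw [hd]
    show γ (b - a + a) = γ b
    rw [sub_add_cancel]
  · intro u hu v hv
    rw [hd] at hu hv
    have h := hiso (u+a) ⟨by linarith [hu.1, ha.1], by linarith [hu.2, hb.2]⟩
      (v+a) ⟨by linarith [hv.1, ha.1], by linarith [hv.2, hb.2]⟩
    rw [h]
    ring_nf
  · rw [hd, ← Set.image_image (f := fun t => t + a) (g := γ),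
      Set.image_add_const_Icc, zero_add, sub_add_cancel]

/-- There is a constant `D ≥ 0` depending only on `δ`, and a constant `E ≥ 0` depending
only on `R` and `δ`, such that if `d(x,y) ≥ 2R + D`, then for any `x' ∈ S_y(x,R)` and
`y' ∈ S_x(y,R)`, any geodesic segment from `x'` to `y'` contains a subsegment `[p',q']`
which `E`-fellow travels a geodesic segment `[x,y]`. -/
theorem shadow_fellow_travel {X : Type*} [MetricSpace X] (δ : ℝ) (hδ : 0 ≤ δ)
    (hgeo : IsGeodesicSpace X) (hhyp : IsDeltaHyperbolic X δ) :
    ∃ D : ℝ, 0 ≤ D ∧ ∀ R : ℝ, 0 ≤ R → ∃ E : ℝ, 0 ≤ E ∧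
      ∀ x y : X, dist x y ≥ 2 * R + D →
        ∀ x' ∈ shadow y x R, ∀ y' ∈ shadow x y R,
          ∀ g : Set X, IsGeodesicSegment g x' y' →
            ∃ p' q' : X, ∃ sub : Set X, sub ⊆ g ∧ IsGeodesicSegment sub p' q' ∧
              ∃ seg : Set X, IsGeodesicSegment seg x y ∧
                Metric.hausdorffDist sub seg ≤ E := by
  refine ⟨7*δ+1, by linarith, fun R hR => ⟨4*R+12*δ+1, by linarith, ?_⟩⟩
  intro x y hxy x' hx'0 y' hy'0 g hg
  obtain ⟨γ, hγ0, hγL, hγiso, hγim⟩ := hg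
  obtain ⟨seg, σ, hσ0, hσl, hσiso, hσim⟩ := hgeo x y
  have hsegg : IsGeodesicSegment seg x y := ⟨σ, hσ0, hσl, hσiso, hσim⟩
  subst hσim
  have hx' : gromovProd y x x' ≥ dist y x - R := hx'0
  have hy' : gromovProd x y y' ≥ dist x y - R := hy'0
  simp only [gromovProd] at hx' hy'
  have hS1 : dist x y + dist x x' - 2*R ≤ dist y x' := by
    linarith [hx', dist_comm y x]
  have hS2 : dist x y + dist y y' - 2*R ≤ dist x y' := by
    linarith [hy']
  have hE0 : (0:ℝ) ≤ 4*R+12*δ+1 := by linarith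
  have hl0 : (0:ℝ) ≤ dist x y := dist_nonneg
  have hxseg : x ∈ σ '' Set.Icc (0:ℝ) (dist x y) := ⟨0, ⟨le_rfl, hl0⟩, hσ0⟩
  have hyseg : y ∈ σ '' Set.Icc (0:ℝ) (dist x y) := ⟨dist x y, ⟨hl0, le_rfl⟩, hσl⟩
  -- Gromov product bounds from the shadow conditions
  have hPx : dist x x' + dist x y' - dist x' y' ≤ 2*R + 2*δ := by
    have hyp := hhyp x' y' y x
    simp only [gromovProd] at hyp
    have hlhs : (dist x x' + dist x y - dist x' y)/2 ≤ R := by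
      linarith [hS1, dist_comm x' y]
    have hmin : min ((dist x x' + dist x y' - dist x' y')/2)
        ((dist x y' + dist x y - dist y' y)/2) ≤ R + δ := by
      linarith [hyp]
    rcases min_le_iff.mp hmin with h | h
    · linarith
    · exfalso
      have : dist x y - R ≤ (dist x y' + dist x y - dist y' y)/2 := by
        linarith [hS2, dist_comm y' y]
      linarith
  have hPy : dist y y' + dist y x' - dist x' y' ≤ 2*R + 2*δ := by
    have hyp := hhyp y' x' x y
    simp only [gromovProd] at hyp
    have hlhs : (dist y y' + dist y x - dist y' x)/2 ≤ R := by
      linarith [hS2, dist_comm y' x, dist_comm y x]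
    have hmin : min ((dist y y' + dist y x' - dist y' x')/2)
        ((dist y x' + dist y x - dist x' x)/2) ≤ R + δ := by
      linarith [hyp]
    rcases min_le_iff.mp hmin with h | h
    · linarith [dist_comm y' x']
    · exfalso
      have : dist x y - R ≤ (dist y x' + dist y x - dist x' x)/2 := by
        linarith [hS1, dist_comm y x, dist_comm x' x]
      linarith
  -- projections of x and y to the geodesic g
  obtain ⟨ta, hta, hxa0⟩ := proj_lemma hhyp hγ0 hγL hγiso x
  have hxa : dist x (γ ta) ≤ R + 3*δ := by
    simp only [gromovProd] at hxa0; linarith [hPx]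
  obtain ⟨tb, htb, hyb0⟩ := proj_lemma hhyp hγ0 hγL hγiso y
  have hyb : dist y (γ tb) ≤ R + 3*δ := by
    simp only [gromovProd] at hyb0; linarith [hPy]
  have hγd := geo_dists hγ0 hγL hγiso
  obtain ⟨hdta, hdta'⟩ := hγd ta hta
  obtain ⟨hdtb, hdtb'⟩ := hγd tb htb
  have hσd := geo_dists hσ0 hσl hσiso
  have hxx'1 : dist x x' ≤ ta + (R + 3*δ) := by
    linarith [dist_triangle x (γ ta) x', dist_comm (γ ta) x', hdta, hxa]
  have hxx'2 : ta - (R+3*δ) ≤ dist x x' := by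
    linarith [dist_triangle x' x (γ ta), hdta, hxa, dist_comm x' x]
  have hyy'1 : dist y y' ≤ (dist x' y' - tb) + (R + 3*δ) := by
    linarith [dist_triangle y (γ tb) y', hyb, hdtb']
  have hyy'2 : (dist x' y' - tb) - (R+3*δ) ≤ dist y y' := by
    linarith [dist_triangle (γ tb) y y', hdtb', hyb, dist_comm (γ tb) y]
  rcases le_or_gt ta tb with hord | hord
  · -- main case: the projections are correctly ordered
    refine ⟨γ ta, γ tb, γ '' Set.Icc ta tb, ?_, subseg hγiso hta htb hord, _, hsegg, ?_⟩
    · rw [hγim]; exact Set.image_mono (Set.Icc_subset_Icc hta.1 htb.2)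
    · apply Metric.hausdorffDist_le_of_mem_dist hE0
      · rintro z ⟨t, ht, rfl⟩
        have htI : t ∈ Set.Icc (0:ℝ) (dist x' y') := ⟨le_trans hta.1 ht.1, le_trans ht.2 htb.2⟩
        obtain ⟨hdt, hdt'⟩ := hγd t htI
        have hyp1 := hhyp x' x y' (γ t)
        have hyp2 := hhyp x y y' (γ t)
        simp only [gromovProd] at hyp1 hyp2
        have h00 : dist (γ t) x' + dist (γ t) y' - dist x' y' = 0 := by
          linarith [hdt, hdt', dist_comm (γ t) x']
        by_cases hc1 : (dist (γ t) x' + dist (γ t) x - dist x' x)/2 ≤ δ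
        · refine ⟨x, hxseg, ?_⟩
          linarith [hc1, hxx'1, dist_comm (γ t) x', hdt, dist_comm x' x, ht.1]
        · have hmin1 : min ((dist (γ t) x' + dist (γ t) x - dist x' x)/2)
              ((dist (γ t) x + dist (γ t) y' - dist x y')/2) ≤ δ := by
            linarith [hyp1, h00]
          have hc1' : (dist (γ t) x + dist (γ t) y' - dist x y')/2 ≤ δ :=
            (min_le_iff.mp hmin1).resolve_left hc1
          by_cases hc2 : (dist (γ t) y + dist (γ t) y' - dist y y')/2 ≤ 2*δ
          · refine ⟨y, hyseg, ?_⟩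
            linarith [hc2, hyy'1, hdt', ht.2]
          · have hmin2 : min ((dist (γ t) x + dist (γ t) y - dist x y)/2)
                ((dist (γ t) y + dist (γ t) y' - dist y y')/2) ≤ 2*δ := by
              linarith [hyp2, hc1']
            have hc3 : (dist (γ t) x + dist (γ t) y - dist x y)/2 ≤ 2*δ :=
              (min_le_iff.mp hmin2).resolve_right hc2
            obtain ⟨s, hsI, hws⟩ := proj_lemma hhyp hσ0 hσl hσiso (γ t)
            refine ⟨σ s, ⟨s, hsI, rfl⟩, ?_⟩
            simp only [gromovProd] at hws
            linarith [hws, hc3]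
      · rintro w ⟨s, hs, rfl⟩
        obtain ⟨hds, hds'⟩ := hσd s hs
        have hyp1 := hhyp x x' y (σ s)
        have hyp2 := hhyp x' y' y (σ s)
        simp only [gromovProd] at hyp1 hyp2
        have h00 : dist (σ s) x + dist (σ s) y - dist x y = 0 := by
          linarith [hds, hds', dist_comm (σ s) x]
        have hsx' : dist x x' - 2*R + s ≤ dist (σ s) x' := by
          linarith [dist_triangle y (σ s) x', hS1, hds', dist_comm y (σ s)]
        have hsy' : dist y y' - 2*R + (dist x y - s) ≤ dist (σ s) y' := by
          linarith [dist_triangle x (σ s) y', hS2, hds]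
        by_cases hc1 : (dist (σ s) x + dist (σ s) x' - dist x x')/2 ≤ δ
        · have hsb : s ≤ R + δ := by
            linarith [hc1, hsx', hds, dist_comm (σ s) x]
          refine ⟨γ ta, ⟨ta, ⟨le_rfl, hord⟩, rfl⟩, ?_⟩
          linarith [dist_triangle (σ s) x (γ ta), hds, dist_comm (σ s) x, hxa, hsb]
        · have hmin1 : min ((dist (σ s) x + dist (σ s) x' - dist x x')/2)
              ((dist (σ s) x' + dist (σ s) y - dist x' y)/2) ≤ δ := by
            linarith [hyp1, h00]
          have hc1' : (dist (σ s) x' + dist (σ s) y - dist x' y)/2 ≤ δ :=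
            (min_le_iff.mp hmin1).resolve_left hc1
          by_cases hc2 : (dist (σ s) y' + dist (σ s) y - dist y' y)/2 ≤ 2*δ
          · have hsb : dist x y - s ≤ R + 2*δ := by
              linarith [hc2, hsy', hds', dist_comm y' y]
            refine ⟨γ tb, ⟨tb, ⟨hord, le_rfl⟩, rfl⟩, ?_⟩
            linarith [dist_triangle (σ s) y (γ tb), hds', hyb, hsb]
          · have hmin2 : min ((dist (σ s) x' + dist (σ s) y' - dist x' y')/2)
                ((dist (σ s) y' + dist (σ s) y - dist y' y)/2) ≤ 2*δ := by
              linarith [hyp2, hc1']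
            have hc3 : (dist (σ s) x' + dist (σ s) y' - dist x' y')/2 ≤ 2*δ :=
              (min_le_iff.mp hmin2).resolve_right hc2
            obtain ⟨t, htI, hwt⟩ := proj_lemma hhyp hγ0 hγL hγiso (σ s)
            simp only [gromovProd] at hwt
            have hwt4 : dist (σ s) (γ t) ≤ 4*δ := by linarith [hwt, hc3]
            obtain ⟨hdt, hdt'⟩ := hγd t htI
            rcases lt_or_ge t ta with hlt | hge
            · have hta_t : ta - t ≤ (R+3*δ) + 2*R + 4*δ - s := by
                linarith [dist_triangle x' (σ s) (γ t), hdt, hwt4,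
                  dist_comm (σ s) (γ t), hsx', dist_comm (σ s) x', hxx'2,
                  dist_triangle x' (γ t) (σ s)]
              have h3 : dist (γ t) (γ ta) = ta - t := by
                rw [hγiso t htI ta hta, abs_of_nonpos (by linarith), neg_sub]
              refine ⟨γ ta, ⟨ta, ⟨le_rfl, hord⟩, rfl⟩, ?_⟩
              linarith [dist_triangle (σ s) (γ t) (γ ta), h3, hwt4, hta_t, hs.1]
            · rcases le_or_gt t tb with hle | hgt
              · exact ⟨γ t, ⟨t, ⟨hge, hle⟩, rfl⟩, by linarith [hwt4]⟩
              · have htb_t : t - tb ≤ (R+3*δ) + 2*R + 4*δ - (dist x y - s) := by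
                  linarith [dist_triangle (σ s) (γ t) y', hdt', hwt4, hsy', hyy'2]
                have h3 : dist (γ t) (γ tb) = t - tb := by
                  rw [hγiso t htI tb htb, abs_of_nonneg (by linarith)]
                refine ⟨γ tb, ⟨tb, ⟨hord, le_rfl⟩, rfl⟩, ?_⟩
                linarith [dist_triangle (σ s) (γ t) (γ tb), h3, hwt4, htb_t, hs.2]
  · -- degenerate case: the whole configuration has size O(R + δ)
    have habd : dist (γ ta) (γ tb) = ta - tb := by
      rw [hγiso ta hta tb htb, abs_of_nonneg (by linarith)]
    have hsmall : dist x y ≤ 3*R + 6*δ := by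
      have h1 : dist x y ≤ dist x (γ ta) + dist (γ ta) (γ tb) + dist (γ tb) y := by
        linarith [dist_triangle x (γ ta) y, dist_triangle (γ ta) (γ tb) y]
      have h2 : dist x' y ≤ tb + (R+3*δ) := by
        linarith [dist_triangle x' (γ tb) y, hdtb, dist_comm (γ tb) y, hyb]
      linarith [h1, habd, hxa, hyb, dist_comm (γ tb) y, h2, hS1, dist_comm y x', hxx'2]
    refine ⟨γ ta, γ ta, γ '' Set.Icc ta ta, ?_, subseg hγiso hta hta le_rfl, _, hsegg, ?_⟩
    · rw [hγim]; exact Set.image_mono (Set.Icc_subset_Icc hta.1 hta.2)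
    · apply Metric.hausdorffDist_le_of_mem_dist hE0
      · rintro z ⟨t, ht, rfl⟩
        have hteq : t = ta := le_antisymm ht.2 ht.1
        refine ⟨x, hxseg, ?_⟩
        rw [hteq]
        linarith [dist_comm (γ ta) x, hxa]
      · rintro w ⟨s, hs, rfl⟩
        obtain ⟨hds, _⟩ := hσd s hs
        refine ⟨γ ta, ⟨ta, ⟨le_rfl, le_rfl⟩, rfl⟩, ?_⟩
        linarith [dist_triangle (σ s) x (γ ta), hds, dist_comm (σ s) x, hxa, hs.2, hsmall]
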